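/- arXiv:2406.08808 — 3 statements merged into one kernel-verified Lean document; each statement's English description precedes it below -/
import Mathlib

section
/- Under the Poisson mixture model with mixing distribution Q supported on [0,θ*], for any δ ∈ (0,1) and with ε(n) = log log n / log n, the chi-square divergence between the empirical PMF and the true mixture satisfies χ²(h^obs‖h_Q) ≤ C n^{−1}(log n)^{θ*+4} δ^{−1−ε} with probability at least 1 − δ, for a sufficiently large constant C > 0 (and all sufficiently large n). -/
open MeasureTheory ProbabilityTheory Set

noncomputable section

set_option maxHeartbeats 1000000

/-- The Poisson mixture PMF `h_Q(x) = ∫₀^{θ*} e^{-θ} θ^x / x! dQ(θ)`. -/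
def poissonMix (Q : Measure ℝ) (x : ℕ) : ℝ :=
  ∫ θ, Real.exp (-θ) * θ ^ x / (Nat.factorial x) ∂Q

/-- `Q` is a mixing distribution: a probability measure supported on `[0, θs]`. -/
def MixingOn (Q : Measure ℝ) (θs : ℝ) : Prop :=
  IsProbabilityMeasure Q ∧ Q (Set.Icc 0 θs)ᶜ = 0

/-- The empirical PMF of the sample `X`. -/
def hObs {n : ℕ} (X : Fin n → ℕ) (x : ℕ) : ℝ :=
  (∑ i, if X i = x then (1 : ℝ) else 0) / n

/-- Chi-square divergence. -/
def chiSq (p q : ℕ → ℝ) : ℝ := ∑' x, (p x - q x) ^ 2 / q x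

/-- `X₁, …, Xₙ` are i.i.d. with common PMF `h` under `P`. -/
def IIDSample {Ω : Type*} [MeasurableSpace Ω] (P : Measure Ω) {n : ℕ}
    (X : Fin n → Ω → ℕ) (h : ℕ → ℝ) : Prop :=
  (∀ i, Measurable (X i)) ∧
  iIndepFun X P ∧
  ∀ i x, P {ω | X i ω = x} = ENNReal.ofReal (h x)


lemma auxDecay (θ : ℝ) (hθ : 0 ≤ θ) (K : ℕ) (hK : 2*θ ≤ K) (j : ℕ) :
    θ^(K+j)/(Nat.factorial (K+j)) ≤ θ^K/(Nat.factorial K) * (1/2)^j := by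
  induction j with
  | zero => simp
  | succ j ih =>
    have hd : (0:ℝ) < (K:ℝ)+j+1 := by
      have h1 := Nat.cast_nonneg (α := ℝ) K
      have h2 := Nat.cast_nonneg (α := ℝ) j
      linarith
    have h1 : θ^(K+(j+1))/(Nat.factorial (K+(j+1)))
        = θ^(K+j)/(Nat.factorial (K+j)) * (θ/((K:ℝ)+j+1)) := by
      rw [show K+(j+1) = (K+j)+1 by ring, pow_succ, Nat.factorial_succ, div_mul_div_comm]
      congr 1
      push_cast
      ring
    have h2 : θ/((K:ℝ)+j+1) ≤ 1/2 := by
      rw [div_le_div_iff₀ hd (by norm_num)]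
      have h2 := Nat.cast_nonneg (α := ℝ) j
      linarith
    rw [h1, pow_succ, ← mul_assoc]
    have hnn : (0:ℝ) ≤ θ^(K+j)/(Nat.factorial (K+j)) := by positivity
    have hnn2 : (0:ℝ) ≤ θ^K/(Nat.factorial K) * (1/2)^j := by positivity
    exact mul_le_mul ih h2 (by positivity) hnn2

lemma auxSummableTail (θ : ℝ) (m : ℕ) :
    Summable (fun j : ℕ => θ^(m+j)/(Nat.factorial (m+j))) := by
  have := (summable_nat_add_iff m).2 (Real.summable_pow_div_factorial θ)
  simpa [add_comm] using this

lemma auxTail (θ : ℝ) (hθ : 0 ≤ θ) (K : ℕ) (hK : 2*θ ≤ K) :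
    ∑' j : ℕ, θ^(K+1+j)/(Nat.factorial (K+1+j)) ≤ θ^K/(Nat.factorial K) := by
  have hsum : Summable (fun j : ℕ => θ^(K+1+j)/(Nat.factorial (K+1+j))) := by
    simpa [add_assoc] using auxSummableTail θ (K+1)
  have hb : ∀ j : ℕ, θ^(K+1+j)/(Nat.factorial (K+1+j))
      ≤ θ^K/(Nat.factorial K) * (1/2)^(1+j) := by
    intro j
    have := auxDecay θ hθ K hK (1+j)
    simpa [add_assoc] using this
  have heq : (fun j : ℕ => θ^K/(Nat.factorial K) * ((1:ℝ)/2)^(1+j))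
      = fun j : ℕ => (θ^K/(Nat.factorial K) * (1/2)) * ((1:ℝ)/2)^j := by
    funext j; rw [pow_add, pow_one]; ring
  have hsumg : Summable (fun j : ℕ => ((1:ℝ)/2)^j) :=
    summable_geometric_of_lt_one (by norm_num) (by norm_num)
  have hsum2 : Summable (fun j : ℕ => θ^K/(Nat.factorial K) * ((1:ℝ)/2)^(1+j)) := by
    rw [heq]; exact hsumg.mul_left _
  calc ∑' j : ℕ, θ^(K+1+j)/(Nat.factorial (K+1+j))
      ≤ ∑' j : ℕ, θ^K/(Nat.factorial K) * ((1:ℝ)/2)^(1+j) := Summable.tsum_le_tsum hb hsum hsum2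
    _ = (θ^K/(Nat.factorial K) * (1/2)) * ∑' j : ℕ, ((1:ℝ)/2)^j := by
        rw [heq, tsum_mul_left]
    _ = θ^K/(Nat.factorial K) := by
        rw [tsum_geometric_of_lt_one (by norm_num) (by norm_num)]
        ring

lemma auxTermLeExp (θ : ℝ) (hθ : 0 ≤ θ) (m : ℕ) :
    θ^m/(Nat.factorial m) ≤ Real.exp θ := by
  have hexp : Real.exp θ = ∑' n : ℕ, θ^n/(Nat.factorial n) := by
    rw [Real.exp_eq_exp_ℝ, NormedSpace.exp_eq_tsum_div]
  rw [hexp]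
  exact Summable.le_tsum (Real.summable_pow_div_factorial θ) m (fun n _ => by positivity)

lemma auxSmall (θ : ℝ) (hθ : 0 ≤ θ) (K : ℕ) (hK : 2*θ ≤ K) :
    θ^K/(Nat.factorial K) ≤ Real.exp (3*θ+1) * Real.exp (-(K * Real.log 2)) := by
  set m := ⌈2*θ⌉₊ with hm
  have hmK : m ≤ K := Nat.ceil_le.2 (by exact_mod_cast hK)
  have hθm : 2*θ ≤ m := Nat.le_ceil _
  have h1 : θ^K/(Nat.factorial K) ≤ θ^m/(Nat.factorial m) * (1/2)^(K-m) := by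
    have := auxDecay θ hθ m hθm (K-m)
    rwa [Nat.add_sub_cancel' hmK] at this
  have h2 : θ^m/(Nat.factorial m) ≤ Real.exp θ := auxTermLeExp θ hθ m
  have h3 : ((1:ℝ)/2)^(K-m) = Real.exp (((K-m:ℕ):ℝ) * Real.log (1/2)) := by
    rw [Real.exp_nat_mul, Real.exp_log (by norm_num : (0:ℝ) < 1/2)]
  have hl2 : 0 < Real.log 2 := Real.log_pos (by norm_num)
  have h4 : (((K-m:ℕ)):ℝ) * Real.log (1/2) ≤ m * Real.log 2 + (-(K * Real.log 2)) := by
    have hc : ((K-m:ℕ):ℝ) = (K:ℝ) - m := by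
      rw [Nat.cast_sub hmK]
    rw [hc, Real.log_div one_ne_zero two_ne_zero, Real.log_one]
    linarith
  have h5 : (m:ℝ) * Real.log 2 ≤ 2*θ+1 := by
    have hlog1 : Real.log 2 ≤ 1 := by
      have := Real.log_le_sub_one_of_pos (show (0:ℝ) < 2 by norm_num)
      linarith
    have hm1 : (m:ℝ) ≤ 2*θ+1 := by
      have := Nat.ceil_lt_add_one (show (0:ℝ) ≤ 2*θ by linarith)
      rw [hm]; linarith
    have hm0 : (0:ℝ) ≤ m := Nat.cast_nonneg m
    nlinarith
  calc θ^K/(Nat.factorial K) ≤ θ^m/(Nat.factorial m) * (1/2)^(K-m) := h1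
    _ ≤ Real.exp θ * Real.exp ((m:ℝ) * Real.log 2 + (-(K * Real.log 2))) := by
        rw [h3]
        exact mul_le_mul h2 (Real.exp_le_exp.2 h4) (Real.exp_pos _).le (Real.exp_pos _).le
    _ ≤ Real.exp θ * Real.exp ((2*θ+1) + (-(K * Real.log 2))) := by
        gcongr
    _ = Real.exp (3*θ+1) * Real.exp (-(K * Real.log 2)) := by
        rw [← Real.exp_add, ← Real.exp_add]
        congr 1
        ring

lemma auxMixNonneg (Q : Measure ℝ) (θs : ℝ) (hQ : MixingOn Q θs) (x : ℕ) :
    0 ≤ poissonMix Q x := by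
  obtain ⟨hprob, hsupp⟩ := hQ
  have hae : ∀ᵐ θ ∂Q, θ ∈ Set.Icc 0 θs := by
    exact mem_ae_iff.mpr hsupp
  apply integral_nonneg_of_ae
  filter_upwards [hae] with θ hθ
  have := hθ.1
  positivity

lemma auxMixLe (Q : Measure ℝ) (θs : ℝ) (hθs : 0 < θs) (hQ : MixingOn Q θs) (x : ℕ) :
    poissonMix Q x ≤ θs ^ x / (Nat.factorial x) := by
  obtain ⟨hprob, hsupp⟩ := hQ
  have hae : ∀ᵐ θ ∂Q, θ ∈ Set.Icc 0 θs := by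
    exact mem_ae_iff.mpr hsupp
  have h := integral_mono_of_nonneg (μ := Q)
    (f := fun θ => Real.exp (-θ) * θ ^ x / (Nat.factorial x))
    (g := fun _ => θs ^ x / (Nat.factorial x)) ?_ (integrable_const _) ?_
  · rw [integral_const] at h
    simpa [poissonMix] using h
  · filter_upwards [hae] with θ hθ
    have := hθ.1
    positivity
  · filter_upwards [hae] with θ hθ
    obtain ⟨h0, h1⟩ := hθ
    have he : Real.exp (-θ) ≤ 1 := by
      rw [Real.exp_le_one_iff]; linarith
    have hp : θ ^ x ≤ θs ^ x := pow_le_pow_left₀ h0 h1 x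
    have hf : (0:ℝ) < Nat.factorial x := by positivity
    have : Real.exp (-θ) * θ ^ x ≤ θs ^ x := by
      calc Real.exp (-θ) * θ ^ x ≤ 1 * θs ^ x :=
        mul_le_mul he hp (by positivity) zero_le_one
      _ = θs ^ x := one_mul _
    exact div_le_div_of_nonneg_right this hf.le

lemma auxAnalytic (θs G L : ℝ) (hθs : 0 < θs) (hG : 3 ≤ G)
    (hlogG : 1 ≤ Real.log G) (hL : 0 ≤ L) :
    4*G + 4*L + (12*θs+13) ≤ (12*θs+21) * G^(θs+4) * Real.exp (Real.log G / G * L) := by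
  have hG0 : (0:ℝ) < G := by linarith
  have hG1 : (1:ℝ) ≤ G := by linarith
  have hrpow1 : (1:ℝ) ≤ G^(θs+4) := by
    calc (1:ℝ) = G^(0:ℝ) := (Real.rpow_zero G).symm
    _ ≤ G^(θs+4) := Real.rpow_le_rpow_of_exponent_le hG1 (by linarith)
  have hexp1 : (1:ℝ) ≤ Real.exp (Real.log G / G * L) := by
    rw [Real.one_le_exp_iff]
    positivity
  have hcube : G^(3:ℕ) = G^((3:ℕ):ℝ) := (Real.rpow_natCast G 3).symm
  rcases le_or_gt L (G^(3:ℕ)) with hcase | hcase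
  · -- L ≤ G³
    have hGG : G ≤ G^(3:ℕ) := by
      calc G = G^(1:ℕ) := (pow_one G).symm
        _ ≤ G^(3:ℕ) := pow_le_pow_right₀ hG1 (by norm_num)
    have h1 : (1:ℝ) ≤ G^(3:ℕ) := by nlinarith
    have hstep : 4*G + 4*L + (12*θs+13) ≤ (12*θs+21) * G^(3:ℕ) := by nlinarith
    have hstep2 : (12*θs+21) * G^(3:ℕ) ≤ (12*θs+21) * G^(θs+4) := by
      have : G^(3:ℕ) ≤ G^(θs+4) := by
        rw [hcube]
        exact Real.rpow_le_rpow_of_exponent_le hG1 (by push_cast; linarith)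
      nlinarith
    calc 4*G + 4*L + (12*θs+13) ≤ (12*θs+21) * G^(θs+4) := hstep.trans hstep2
      _ = (12*θs+21) * G^(θs+4) * 1 := (mul_one _).symm
      _ ≤ (12*θs+21) * G^(θs+4) * Real.exp (Real.log G / G * L) := by
          apply mul_le_mul_of_nonneg_left hexp1
          positivity
  · -- G³ < L
    have h27G : (27:ℝ) ≤ G^(3:ℕ) := by
      calc (27:ℝ) = 3^(3:ℕ) := by norm_num
        _ ≤ G^(3:ℕ) := pow_le_pow_left₀ (by norm_num) hG 3
    have hL27 : (27:ℝ) < L := by linarith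
    have hL0 : (0:ℝ) < L := by linarith
    have hGL3 : G ≤ L^((1:ℝ)/3) := by
      have h1 : G = (G^(3:ℕ))^((1:ℝ)/3) := by
        rw [hcube, ← Real.rpow_mul hG0.le]
        norm_num
      rw [h1]
      exact Real.rpow_le_rpow (by positivity) hcase.le (by norm_num)
    have h3L : (3:ℝ) ≤ L^((1:ℝ)/3) := by
      have h27 : ((27:ℝ))^((1:ℝ)/3) = 3 := by
        rw [show (27:ℝ) = 3^(3:ℕ) by norm_num, ← Real.rpow_natCast (3:ℝ) 3,
          ← Real.rpow_mul (by norm_num : (0:ℝ) ≤ 3)]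
        norm_num
      calc (3:ℝ) = (27:ℝ)^((1:ℝ)/3) := h27.symm
        _ ≤ L^((1:ℝ)/3) := Real.rpow_le_rpow (by norm_num) hL27.le (by norm_num)
    have hlogL : Real.log L ≤ L^((2:ℝ)/3) := by
      have e1 : Real.log (L^((1:ℝ)/3)) = (1/3) * Real.log L := Real.log_rpow hL0 _
      have e2 : Real.log (L^((1:ℝ)/3)) ≤ L^((1:ℝ)/3) - 1 :=
        Real.log_le_sub_one_of_pos (Real.rpow_pos_of_pos hL0 _)
      have e3 : L^((1:ℝ)/3) * L^((1:ℝ)/3) = L^((2:ℝ)/3) := by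
        rw [← Real.rpow_add hL0]; norm_num
      nlinarith [Real.rpow_pos_of_pos hL0 ((1:ℝ)/3)]
    have hLG : L^((2:ℝ)/3) ≤ L/G := by
      have e4 : L / L^((1:ℝ)/3) = L^((2:ℝ)/3) := by
        have h := Real.rpow_sub hL0 1 ((1:ℝ)/3)
        rw [Real.rpow_one] at h
        norm_num at h
        exact h.symm
      rw [← e4]
      exact div_le_div_of_nonneg_left hL0.le hG0 hGL3
    have hLexp : L ≤ Real.exp (Real.log G / G * L) := by
      have : Real.log L ≤ Real.log G / G * L := by
        have h5 : L/G ≤ Real.log G / G * L := by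
          calc L/G = L/G*1 := (mul_one _).symm
            _ ≤ L/G*Real.log G := mul_le_mul_of_nonneg_left hlogG (by positivity)
            _ = Real.log G / G * L := by ring
        linarith [hlogL.trans (hLG.trans h5)]
      calc L = Real.exp (Real.log L) := (Real.exp_log hL0).symm
        _ ≤ _ := Real.exp_le_exp.2 this
    have hGG : G ≤ G^(3:ℕ) := by
      calc G = G^(1:ℕ) := (pow_one G).symm
        _ ≤ G^(3:ℕ) := pow_le_pow_right₀ hG1 (by norm_num)
    have hGLle : G ≤ L := by linarith
    have hstep : 4*G + 4*L + (12*θs+13) ≤ (12*θs+21) * L := by nlinarith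
    calc 4*G + 4*L + (12*θs+13) ≤ (12*θs+21) * L := hstep
      _ ≤ (12*θs+21) * Real.exp (Real.log G / G * L) := by nlinarith
      _ = (12*θs+21) * 1 * Real.exp (Real.log G / G * L) := by ring
      _ ≤ (12*θs+21) * G^(θs+4) * Real.exp (Real.log G / G * L) := by
          have he := Real.exp_pos (Real.log G / G * L)
          apply mul_le_mul_of_nonneg_right _ he.le
          exact mul_le_mul_of_nonneg_left hrpow1 (by linarith)

lemma auxVar {Ω : Type} [MeasurableSpace Ω] (P : Measure Ω) [IsProbabilityMeasure P]
    {n : ℕ} (X : Fin n → Ω → ℕ) (hmeas : ∀ i, Measurable (X i))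
    (hindep : iIndepFun X P)
    (q : ℝ) (hq0 : 0 ≤ q) (x : ℕ) (hq : ∀ i, P {ω | X i ω = x} = ENNReal.ofReal q)
    (hn : 0 < n) :
    ∫ ω, ((∑ i, if X i ω = x then (1:ℝ) else 0)/(n:ℝ) - q)^2 ∂P ≤ q/n := by
  set s : Fin n → Set Ω := fun i => X i ⁻¹' {x} with hsdef
  have hs : ∀ i, MeasurableSet (s i) := fun i => (hmeas i) (measurableSet_singleton x)
  set Y : Fin n → Ω → ℝ := fun i => (s i).indicator (fun _ => (1:ℝ)) with hYdef
  have hYeq : ∀ (i : Fin n) (ω : Ω), (if X i ω = x then (1:ℝ) else 0) = Y i ω := by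
    intro i ω
    by_cases h : X i ω = x <;> simp [hYdef, Set.indicator_apply, hsdef, h]
  have hPs : ∀ i, P (s i) = ENNReal.ofReal q := by
    intro i
    rw [← hq i]
    rfl
  have hEY : ∀ i, ∫ ω, Y i ω ∂P = q := by
    intro i
    rw [hYdef]
    rw [integral_indicator_const (1:ℝ) (hs i), measureReal_def, hPs i, smul_eq_mul, mul_one,
      ENNReal.toReal_ofReal hq0]
  have hYY : ∀ i j, (fun ω => Y i ω * Y j ω) = (s i ∩ s j).indicator (fun _ => (1:ℝ)) := by
    intro i j
    funext ω
    by_cases h1 : ω ∈ s i <;> by_cases h2 : ω ∈ s j <;>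
      simp [hYdef, Set.indicator_apply, h1, h2]
  have hEYY : ∀ i j, ∫ ω, Y i ω * Y j ω ∂P = (P (s i ∩ s j)).toReal := by
    intro i j
    rw [hYY i j, integral_indicator_const (1:ℝ) ((hs i).inter (hs j)), smul_eq_mul, mul_one, measureReal_def]
  have hVal : ∀ i j, ∫ ω, Y i ω * Y j ω ∂P = if i = j then q else q^2 := by
    intro i j
    rw [hEYY i j]
    have hPs' : ∀ k, P (X k ⁻¹' {x}) = ENNReal.ofReal q := hPs
    by_cases hij : i = j
    · subst hij
      rw [if_pos rfl, Set.inter_self, hPs i, ENNReal.toReal_ofReal hq0]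
    · rw [if_neg hij]
      have h2 := (hindep.indepFun hij).measure_inter_preimage_eq_mul
        (s := {x}) (t := {x}) (measurableSet_singleton x) (measurableSet_singleton x)
      show (P (X i ⁻¹' {x} ∩ X j ⁻¹' {x})).toReal = q^2
      rw [h2, hPs' i, hPs' j, ← ENNReal.ofReal_mul hq0,
        ENNReal.toReal_ofReal (mul_nonneg hq0 hq0), sq]
  have hYint : ∀ i, Integrable (Y i) P := by
    intro i
    rw [hYdef]
    exact (integrable_const (1:ℝ)).indicator (hs i)
  have hYYint : ∀ i j, Integrable (fun ω => Y i ω * Y j ω) P := by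
    intro i j
    rw [hYY i j]
    exact (integrable_const (1:ℝ)).indicator ((hs i).inter (hs j))
  set g : Ω → ℝ := fun ω => ∑ i, Y i ω with hgdef
  have hgint : Integrable g P := integrable_finset_sum _ (fun i _ => hYint i)
  have hEg : ∫ ω, g ω ∂P = n * q := by
    rw [hgdef, integral_finset_sum _ (fun i _ => hYint i)]
    simp [hEY, Finset.sum_const, Finset.card_univ]
  have hg2eq : (fun ω => (g ω)^2) = fun ω => ∑ i, ∑ j, Y i ω * Y j ω := by
    funext ω
    rw [hgdef, sq, Finset.sum_mul_sum]
  have hg2int : Integrable (fun ω => (g ω)^2) P := by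
    rw [hg2eq]
    exact integrable_finset_sum _ (fun i _ => integrable_finset_sum _ (fun j _ => hYYint i j))
  have hEg2 : ∫ ω, (g ω)^2 ∂P = n * q + ((n:ℝ)^2 - n) * q^2 := by
    rw [hg2eq, integral_finset_sum _ (fun i _ => integrable_finset_sum _ (fun j _ => hYYint i j))]
    have : ∀ i : Fin n, ∫ ω, (∑ j, Y i ω * Y j ω) ∂P = q + ((n:ℝ) - 1) * q^2 := by
      intro i
      rw [integral_finset_sum _ (fun j _ => hYYint i j)]
      have : ∀ j : Fin n, ∫ ω, Y i ω * Y j ω ∂P = q^2 + (if i = j then q - q^2 else 0) := by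
        intro j
        rw [hVal i j]
        by_cases hij : i = j <;> simp [hij]
      rw [Finset.sum_congr rfl (fun j _ => this j)]
      rw [Finset.sum_add_distrib, Finset.sum_const, Finset.card_univ, Finset.sum_ite_eq]
      simp
      ring
    rw [Finset.sum_congr rfl (fun i (_ : i ∈ Finset.univ) => this i)]
    rw [Finset.sum_const, Finset.card_univ, Fintype.card_fin, nsmul_eq_mul]
    ring
  have hexp : (fun ω => ((∑ i, if X i ω = x then (1:ℝ) else 0)/(n:ℝ) - q)^2)
      = fun ω => ((n:ℝ)⁻¹)^2 * (g ω)^2 - (2*q*(n:ℝ)⁻¹) * g ω + q^2 := by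
    funext ω
    have hsum : (∑ i, if X i ω = x then (1:ℝ) else 0) = g ω := by
      rw [hgdef]
      exact Finset.sum_congr rfl (fun i _ => hYeq i ω)
    rw [hsum]
    ring
  rw [hexp]
  have hint1 : Integrable (fun ω => ((n:ℝ)⁻¹)^2 * (g ω)^2) P := hg2int.const_mul _
  have hint2 : Integrable (fun ω => (2*q*(n:ℝ)⁻¹) * g ω) P := hgint.const_mul _
  have hsub : Integrable (fun ω => ((n:ℝ)⁻¹)^2 * (g ω)^2 - (2*q*(n:ℝ)⁻¹) * g ω) P :=
    hint1.sub hint2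
  rw [integral_add hsub (integrable_const _), integral_sub hint1 hint2,
    integral_const_mul, integral_const_mul, hEg2, hEg, integral_const]
  have hn0 : (n:ℝ) ≠ 0 := by positivity
  simp only [measure_univ, probReal_univ, ENNReal.toReal_one, smul_eq_mul, one_mul, one_smul]
  have harith2 : ((n:ℝ)⁻¹)^2*((n:ℝ)*q + ((n:ℝ)^2 - n)*q^2) - (2*q*(n:ℝ)⁻¹)*((n:ℝ)*q)
      + q^2 = q/n - q^2/n := by
    field_simp
    ring
  rw [harith2]
  have hq2 : 0 ≤ q^2/n := by positivity
  linarith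

/-- high-probability chi-square bound between the empirical PMF and
the Poisson mixture PMF: with probability at least `1 - δ`,
`χ²(h^obs ‖ h_Q) ≤ C n^{-1} (log n)^{θ*+4} δ^{-1-ε}` with `ε = log log n / log n`. -/
theorem stmt6 (θs : ℝ) (hθ : 0 < θs) :
    ∃ C > (0:ℝ), ∃ N : ℕ, ∀ n : ℕ, N ≤ n →
    ∀ δ ∈ Set.Ioo (0:ℝ) 1,
    ∀ Q : Measure ℝ, MixingOn Q θs →
    ∀ (Ω : Type) (_ : MeasurableSpace Ω) (P : Measure Ω), IsProbabilityMeasure P →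
    ∀ X : Fin n → Ω → ℕ, IIDSample P X (poissonMix Q) →
    ENNReal.ofReal (1 - δ) ≤
      P {ω | chiSq (hObs (fun i => X i ω)) (poissonMix Q) ≤
        C * (n : ℝ)⁻¹ * Real.log n ^ (θs + 4) *
          δ ^ (-1 - Real.log (Real.log n) / Real.log n)} := by
  classical
  refine ⟨12*θs+21, by linarith, 30, ?_⟩
  intro n hn δ hδ Q hQ Ω mΩ P hP X hXiid
  obtain ⟨hmeas, hindep, hdist⟩ := hXiid
  haveI := hP
  set q : ℕ → ℝ := poissonMix Q with hqdef
  have hq0 : ∀ x, 0 ≤ q x := auxMixNonneg Q θs hQ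
  have hqa : ∀ x, q x ≤ θs^x / (Nat.factorial x) := auxMixLe Q θs hθ hQ
  have hn0 : 0 < n := lt_of_lt_of_le (by norm_num) hn
  have hnR : (30:ℝ) ≤ n := by exact_mod_cast hn
  have hnR0 : (0:ℝ) < n := by linarith
  set G : ℝ := Real.log n with hGdef
  have hexp1lt : Real.exp 1 < 2.7182818286 := Real.exp_one_lt_d9
  have hG3 : 3 ≤ G := by
    rw [hGdef, Real.le_log_iff_exp_le hnR0]
    have h3 : Real.exp 3 = (Real.exp 1)^(3:ℕ) := by
      rw [← Real.exp_nat_mul]; norm_num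
    have : (Real.exp 1)^(3:ℕ) < 2.7182818286^(3:ℕ) :=
      pow_lt_pow_left₀ hexp1lt (Real.exp_pos 1).le (by norm_num)
    rw [h3]
    nlinarith
  have hG0 : (0:ℝ) < G := by linarith
  have hlogG : 1 ≤ Real.log G := by
    rw [Real.le_log_iff_exp_le hG0]
    nlinarith
  set L : ℝ := -Real.log δ with hLdef
  have hL0 : 0 ≤ L := by
    rw [hLdef, neg_nonneg]
    exact Real.log_nonpos hδ.1.le hδ.2.le
  have hexpL : Real.exp (-L) = δ := by
    rw [hLdef, neg_neg, Real.exp_log hδ.1]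
  have hexpL1 : 1 ≤ Real.exp L := by
    rw [Real.one_le_exp_iff]; exact hL0
  set R : ℝ := G + L + 3*θs + 2 with hRdef
  have hR0 : (0:ℝ) < R := by rw [hRdef]; nlinarith
  set K : ℕ := ⌈2*R⌉₊ with hKdef
  have hKR : 2*R ≤ (K:ℝ) := Nat.le_ceil _
  have hKup : (K:ℝ) ≤ 2*R + 1 := by
    have := Nat.ceil_lt_add_one (show (0:ℝ) ≤ 2*R by linarith)
    rw [hKdef]; linarith
  have hK2θ : 2*θs ≤ (K:ℝ) := by nlinarith
  set aK : ℝ := θs^K/(Nat.factorial K) with haKdef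
  have haK0 : 0 ≤ aK := by rw [haKdef]; positivity
  have haKsmall : aK ≤ Real.exp (-1) * (δ / n) := by
    have h1 : aK ≤ Real.exp (3*θs+1) * Real.exp (-(K * Real.log 2)) :=
      auxSmall θs hθ.le K hK2θ
    have hlog2 : (0.6931471803:ℝ) < Real.log 2 := Real.log_two_gt_d9
    have h2 : R ≤ (K:ℝ) * Real.log 2 := by nlinarith
    have h3 : Real.exp (-((K:ℝ) * Real.log 2)) ≤ Real.exp (-R) :=
      Real.exp_le_exp.2 (by linarith)
    have h4 : Real.exp (3*θs+1) * Real.exp (-R) = Real.exp (-1) * (Real.exp (-G) * Real.exp (-L)) := by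
      rw [← Real.exp_add, ← Real.exp_add, ← Real.exp_add]
      congr 1
      rw [hRdef]; ring
    have h5 : Real.exp (-G) = (n:ℝ)⁻¹ := by
      rw [hGdef, Real.exp_neg, Real.exp_log hnR0]
    calc aK ≤ Real.exp (3*θs+1) * Real.exp (-((K:ℝ) * Real.log 2)) := h1
      _ ≤ Real.exp (3*θs+1) * Real.exp (-R) := by
          have := (Real.exp_pos (3*θs+1)).le
          exact mul_le_mul_of_nonneg_left h3 this
      _ = Real.exp (-1) * ((n:ℝ)⁻¹ * δ) := by rw [h4, h5, hexpL]
      _ = Real.exp (-1) * (δ / n) := by ring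
  have hexpneg1 : Real.exp (-1) ≤ 1/2 := by
    rw [Real.exp_neg]
    rw [inv_le_comm₀ (Real.exp_pos 1) (by norm_num)]
    have := Real.add_one_le_exp 1
    linarith
  have haKhalf : aK ≤ δ/(2*n) := by
    have hd : 0 ≤ δ / n := div_nonneg hδ.1.le hnR0.le
    calc aK ≤ Real.exp (-1) * (δ/n) := haKsmall
      _ ≤ (1/2) * (δ/n) := mul_le_mul_of_nonneg_right hexpneg1 hd
      _ = δ/(2*n) := by ring
  -- the truncated chi-square statistic
  set S : Ω → ℝ := fun ω =>
    ∑ x ∈ Finset.range (K+1), ((hObs (fun i => X i ω) x - q x)^2 / q x) with hSdef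
  set t : ℝ := 2*(K+1)/(n*δ) with htdef
  have ht0 : 0 < t := by
    rw [htdef]
    apply div_pos (by positivity) (mul_pos hnR0 hδ.1)
  set A : Set Ω := ⋂ i, {ω | X i ω ≤ K} with hAdef
  set B : Set Ω := {ω | S ω < t} with hBdef
  have hmA : MeasurableSet A := by
    rw [hAdef]
    exact MeasurableSet.iInter (fun i => (hmeas i) measurableSet_Iic)
  have hmhObs : ∀ x : ℕ, Measurable (fun ω => hObs (fun i => X i ω) x) := by
    intro x
    show Measurable fun ω => (∑ i, if X i ω = x then (1:ℝ) else 0)/(n:ℝ)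
    apply Measurable.div_const
    apply Finset.measurable_sum
    intro i _
    exact Measurable.ite ((hmeas i) (measurableSet_singleton x))
      measurable_const measurable_const
  have hmS : Measurable S := by
    rw [hSdef]
    apply Finset.measurable_sum
    intro x _
    exact (((hmhObs x).sub measurable_const).pow_const 2).div_const _
  have hmB : MeasurableSet B := measurableSet_lt hmS measurable_const
  -- bounds on hObs
  have hObs01 : ∀ (ω : Ω) (x : ℕ), 0 ≤ hObs (fun i => X i ω) x ∧ hObs (fun i => X i ω) x ≤ 1 := by
    intro ω x
    constructor
    · show 0 ≤ (∑ i, if X i ω = x then (1:ℝ) else 0)/(n:ℝ)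
      apply div_nonneg _ hnR0.le
      apply Finset.sum_nonneg
      intro i _
      split <;> norm_num
    · show (∑ i, if X i ω = x then (1:ℝ) else 0)/(n:ℝ) ≤ 1
      rw [div_le_one hnR0]
      calc (∑ i, if X i ω = x then (1:ℝ) else 0) ≤ ∑ _i : Fin n, (1:ℝ) := by
            apply Finset.sum_le_sum
            intro i _
            split <;> norm_num
        _ = n := by simp
  -- integrability of each truncated term
  have hterm_int : ∀ x : ℕ,
      Integrable (fun ω => (hObs (fun i => X i ω) x - q x)^2 / q x) P := by
    intro x
    apply Integrable.div_const
    apply Integrable.mono' (integrable_const ((1 + q x)^2))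
      (((hmhObs x).sub measurable_const).pow_const 2).aestronglyMeasurable
    apply ae_of_all
    intro ω
    obtain ⟨h0, h1⟩ := hObs01 ω x
    have habs : |hObs (fun i => X i ω) x - q x| ≤ 1 + q x := by
      rw [abs_le]
      constructor <;> nlinarith [hq0 x]
    have h2 : (0:ℝ) ≤ 1 + q x := by nlinarith [hq0 x]
    calc ‖(hObs (fun i => X i ω) x - q x)^2‖
        = |hObs (fun i => X i ω) x - q x|^2 := by
          rw [Real.norm_eq_abs, ← abs_pow, abs_pow]
      _ ≤ (1 + q x)^2 := by nlinarith [abs_nonneg (hObs (fun i => X i ω) x - q x)]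
  have hSint : Integrable S P := by
    rw [hSdef]
    exact integrable_finset_sum _ (fun x _ => hterm_int x)
  have hS0 : ∀ ω, 0 ≤ S ω := by
    intro ω
    rw [hSdef]
    apply Finset.sum_nonneg
    intro x _
    exact div_nonneg (sq_nonneg _) (hq0 x)
  -- expectation bound
  have hES : ∫ ω, S ω ∂P ≤ ((K:ℝ)+1)/n := by
    rw [hSdef]
    rw [integral_finset_sum _ (fun x _ => hterm_int x)]
    have hxbound : ∀ x : ℕ,
        ∫ ω, (hObs (fun i => X i ω) x - q x)^2 / q x ∂P ≤ 1/(n:ℝ) := by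
      intro x
      rw [integral_div]
      by_cases hqx : q x = 0
      · rw [hqx, div_zero]
        positivity
      · have hqpos : 0 < q x := lt_of_le_of_ne (hq0 x) (Ne.symm hqx)
        have hvar : ∫ ω, (hObs (fun i => X i ω) x - q x)^2 ∂P ≤ q x / n := by
          have := auxVar P X hmeas hindep (q x) (hq0 x) x (fun i => hdist i x) hn0
          exact this
        calc (∫ ω, (hObs (fun i => X i ω) x - q x)^2 ∂P) / q x
            ≤ (q x / n) / q x := by
              apply div_le_div_of_nonneg_right hvar hqpos.le
          _ = 1/(n:ℝ) := by
              have h9 : q x / ↑n / q x = (q x / q x) / (n:ℝ) := by ring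
              rw [h9, div_self hqx]
    calc ∑ x ∈ Finset.range (K+1), ∫ ω, (hObs (fun i => X i ω) x - q x)^2 / q x ∂P
        ≤ ∑ _x ∈ Finset.range (K+1), 1/(n:ℝ) :=
          Finset.sum_le_sum (fun x _ => hxbound x)
      _ = ((K:ℝ)+1)/n := by
          rw [Finset.sum_const, Finset.card_range]
          push_cast
          ring
  -- Markov inequality
  have hMarkov : P {ω | t ≤ S ω} ≤ ENNReal.ofReal (δ/2) := by
    have h1 := mul_meas_ge_le_integral_of_nonneg (ae_of_all P hS0) hSint t
    have h2 : t * (P {ω | t ≤ S ω}).toReal ≤ ((K:ℝ)+1)/n := le_trans h1 hES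
    have h3 : (P {ω | t ≤ S ω}).toReal ≤ δ/2 := by
      rw [← le_div_iff₀' ht0] at h2
      calc (P {ω | t ≤ S ω}).toReal ≤ (((K:ℝ)+1)/n) / t := h2
        _ = δ/2 := by
            rw [htdef]
            have hδ0 : δ ≠ 0 := ne_of_gt hδ.1
            have hKn : ((K:ℝ)+1) ≠ 0 := by positivity
            have : (n:ℝ) ≠ 0 := ne_of_gt hnR0
            field_simp
    calc P {ω | t ≤ S ω} = ENNReal.ofReal ((P {ω | t ≤ S ω}).toReal) :=
          (ENNReal.ofReal_toReal (measure_ne_top P _)).symm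
      _ ≤ ENNReal.ofReal (δ/2) := ENNReal.ofReal_le_ofReal h3
  -- tail event bound
  have htail_q : ∑' j : ℕ, q (K+1+j) ≤ aK := by
    have hsum_a : Summable (fun j : ℕ => θs^(K+1+j)/(Nat.factorial (K+1+j))) := by
      simpa [add_assoc] using auxSummableTail θs (K+1)
    have hsum_q : Summable (fun j : ℕ => q (K+1+j)) := by
      apply Summable.of_nonneg_of_le (fun j => hq0 _) (fun j => hqa _) hsum_a
    calc ∑' j : ℕ, q (K+1+j) ≤ ∑' j : ℕ, θs^(K+1+j)/(Nat.factorial (K+1+j)) :=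
          Summable.tsum_le_tsum (fun j => hqa _) hsum_q hsum_a
      _ ≤ aK := auxTail θs hθ.le K hK2θ
  have hAc : P Aᶜ ≤ ENNReal.ofReal (δ/2) := by
    have hsub : Aᶜ ⊆ ⋃ i : Fin n, {ω | K < X i ω} := by
      intro ω hω
      rw [Set.mem_compl_iff, hAdef, Set.mem_iInter] at hω
      push_neg at hω
      obtain ⟨i, hi⟩ := hω
      rw [Set.mem_setOf_eq] at hi
      exact Set.mem_iUnion.2 ⟨i, not_le.1 hi⟩
    have hone : ∀ i : Fin n, P {ω | K < X i ω} ≤ ENNReal.ofReal aK := by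
      intro i
      have hsub2 : {ω | K < X i ω} ⊆ ⋃ j : ℕ, {ω | X i ω = K+1+j} := by
        intro ω hω
        rw [Set.mem_setOf_eq] at hω
        refine Set.mem_iUnion.2 ⟨X i ω - (K+1), ?_⟩
        simp only [Set.mem_setOf_eq]
        omega
      calc P {ω | K < X i ω} ≤ P (⋃ j : ℕ, {ω | X i ω = K+1+j}) := measure_mono hsub2
        _ ≤ ∑' j : ℕ, P {ω | X i ω = K+1+j} := measure_iUnion_le _
        _ = ∑' j : ℕ, ENNReal.ofReal (q (K+1+j)) := by
            congr 1
            funext j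
            exact hdist i (K+1+j)
        _ = ENNReal.ofReal (∑' j : ℕ, q (K+1+j)) := by
            rw [ENNReal.ofReal_tsum_of_nonneg (fun j => hq0 _)]
            apply Summable.of_nonneg_of_le (fun j => hq0 _) (fun j => hqa _)
            simpa [add_assoc] using auxSummableTail θs (K+1)
        _ ≤ ENNReal.ofReal aK := ENNReal.ofReal_le_ofReal htail_q
    calc P Aᶜ ≤ P (⋃ i : Fin n, {ω | K < X i ω}) := measure_mono hsub
      _ ≤ ∑' i : Fin n, P {ω | K < X i ω} := measure_iUnion_le _
      _ ≤ ∑' _i : Fin n, ENNReal.ofReal aK := ENNReal.tsum_le_tsum hone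
      _ = (n : ENNReal) * ENNReal.ofReal aK := by
          rw [tsum_fintype]
          simp [Finset.card_univ, mul_comm]
      _ = ENNReal.ofReal (n * aK) := by
          rw [ENNReal.ofReal_mul (by positivity : (0:ℝ) ≤ (n:ℝ))]
          simp
      _ ≤ ENNReal.ofReal (δ/2) := by
          apply ENNReal.ofReal_le_ofReal
          calc (n:ℝ) * aK ≤ (n:ℝ) * (δ/(2*n)) := mul_le_mul_of_nonneg_left haKhalf hnR0.le
            _ = δ/2 := by
                rw [mul_comm 2 (n:ℝ), ← div_div, mul_div_assoc']
                rw [mul_div_assoc', mul_comm (n:ℝ) δ, mul_div_assoc, div_self (ne_of_gt hnR0), mul_one]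
  -- the good event is contained in the target event
  have hsubset : A ∩ B ⊆ {ω | chiSq (hObs (fun i => X i ω)) q ≤
      (12*θs+21) * (n : ℝ)⁻¹ * G ^ (θs + 4) * δ ^ (-1 - Real.log G / G)} := by
    intro ω hω
    obtain ⟨hωA, hωB⟩ := hω
    have hXle : ∀ i, X i ω ≤ K := by
      intro i
      have := Set.mem_iInter.1 hωA i
      exact this
    have hωB' : S ω < t := hωB
    set p : ℕ → ℝ := hObs (fun i => X i ω) with hpdef
    set f : ℕ → ℝ := fun x => (p x - q x)^2 / q x with hfdef
    have hp0 : ∀ x, K < x → p x = 0 := by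
      intro x hx
      rw [hpdef]
      show (∑ i, if X i ω = x then (1:ℝ) else 0)/(n:ℝ) = 0
      rw [Finset.sum_eq_zero, zero_div]
      intro i _
      rw [if_neg]
      intro hc
      exact absurd (hc ▸ hXle i) (not_le.2 hx)
    have hftail : ∀ j : ℕ, f (K+1+j) ≤ θs^(K+1+j)/(Nat.factorial (K+1+j)) := by
      intro j
      rw [hfdef]
      simp only
      rw [hp0 (K+1+j) (by omega)]
      by_cases hqx : q (K+1+j) = 0
      · rw [hqx, div_zero]
        positivity
      · have hqpos : 0 < q (K+1+j) := lt_of_le_of_ne (hq0 _) (Ne.symm hqx)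
        have : (0 - q (K+1+j))^2 / q (K+1+j) = q (K+1+j) := by
          field_simp
          ring
        rw [this]
        exact hqa _
    have hfnn : ∀ x, 0 ≤ f x := by
      intro x
      rw [hfdef]
      exact div_nonneg (sq_nonneg _) (hq0 x)
    have hsum_a : Summable (fun j : ℕ => θs^(K+1+j)/(Nat.factorial (K+1+j))) := by
      simpa [add_assoc] using auxSummableTail θs (K+1)
    have hftail' : ∀ j : ℕ, f (j + (K+1)) ≤ θs^(K+1+j)/(Nat.factorial (K+1+j)) := by
      intro j
      rw [add_comm]
      exact hftail j
    have hsumf_tail : Summable (fun j : ℕ => f (j + (K+1))) :=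
      Summable.of_nonneg_of_le (fun j => hfnn _) hftail' hsum_a
    have hfsum : Summable f := (summable_nat_add_iff (K+1)).1 hsumf_tail
    have hsplit : chiSq p q = (∑ x ∈ Finset.range (K+1), f x) + ∑' j : ℕ, f (j + (K+1)) := by
      rw [chiSq]
      exact (Summable.sum_add_tsum_nat_add (K+1) hfsum).symm
    have hhead : (∑ x ∈ Finset.range (K+1), f x) = S ω := by
      rw [hSdef, hfdef, hpdef]
    have htailf : ∑' j : ℕ, f (j + (K+1)) ≤ aK := by
      calc ∑' j : ℕ, f (j + (K+1)) ≤ ∑' j : ℕ, θs^(K+1+j)/(Nat.factorial (K+1+j)) :=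
            Summable.tsum_le_tsum hftail' hsumf_tail hsum_a
        _ ≤ aK := auxTail θs hθ.le K hK2θ
    have hchi : chiSq p q ≤ t + aK := by
      rw [hsplit, hhead]
      have := hωB'.le
      linarith [htailf]
    -- final numeric bound
    have hrpow : δ ^ (-1 - Real.log G / G) = Real.exp L * Real.exp (Real.log G / G * L) := by
      rw [Real.rpow_def_of_pos hδ.1, ← Real.exp_add]
      congr 1
      have : Real.log δ = -L := by rw [hLdef, neg_neg]
      rw [this]
      ring
    have hδinv : 1/δ = Real.exp L := by
      rw [← hexpL, Real.exp_neg]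
      field_simp
    have hbound : t + aK ≤ (12*θs+21) * (n : ℝ)⁻¹ * G ^ (θs + 4) * δ ^ (-1 - Real.log G / G) := by
      have ht_eq : t = 2*((K:ℝ)+1) * (n:ℝ)⁻¹ * Real.exp L := by
        rw [htdef, ← hδinv]
        have hδ0 : δ ≠ 0 := ne_of_gt hδ.1
        have hn0' : (n:ℝ) ≠ 0 := ne_of_gt hnR0
        field_simp
      have hK1 : 2*((K:ℝ)+1) ≤ 4*G + 4*L + (12*θs+12) := by
        rw [hRdef] at hKup
        linarith
      have haK3 : aK ≤ (n:ℝ)⁻¹ * Real.exp L := by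
        have he1 : Real.exp (-1) ≤ 1 := by nlinarith [hexpneg1]
        have hd : δ/n ≤ 1/n := by gcongr; exact hδ.2.le
        calc aK ≤ Real.exp (-1) * (δ/n) := haKsmall
          _ ≤ 1 * (1/n) :=
              mul_le_mul he1 hd (div_nonneg hδ.1.le hnR0.le) zero_le_one
          _ = (n:ℝ)⁻¹ := by ring
          _ ≤ (n:ℝ)⁻¹ * Real.exp L := by
              nlinarith [inv_pos.2 hnR0]
      have hana := auxAnalytic θs G L hθ hG3 hlogG hL0
      have hGpow1 : (1:ℝ) ≤ G^(θs+4) := by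
        calc (1:ℝ) = G^(0:ℝ) := (Real.rpow_zero G).symm
          _ ≤ G^(θs+4) := Real.rpow_le_rpow_of_exponent_le (by linarith) (by linarith)
      calc t + aK ≤ 2*((K:ℝ)+1) * (n:ℝ)⁻¹ * Real.exp L + (n:ℝ)⁻¹ * Real.exp L := by
            rw [ht_eq]; linarith [haK3]
        _ = (2*((K:ℝ)+1) + 1) * ((n:ℝ)⁻¹ * Real.exp L) := by ring
        _ ≤ (4*G + 4*L + (12*θs+13)) * ((n:ℝ)⁻¹ * Real.exp L) := by
            apply mul_le_mul_of_nonneg_right (by linarith) (by positivity)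
        _ ≤ ((12*θs+21) * G^(θs+4) * Real.exp (Real.log G / G * L)) * ((n:ℝ)⁻¹ * Real.exp L) := by
            apply mul_le_mul_of_nonneg_right hana (by positivity)
        _ = (12*θs+21) * (n : ℝ)⁻¹ * G ^ (θs + 4) * (Real.exp L * Real.exp (Real.log G / G * L)) := by
            ring
        _ = (12*θs+21) * (n : ℝ)⁻¹ * G ^ (θs + 4) * δ ^ (-1 - Real.log G / G) := by
            rw [hrpow]
    exact le_trans hchi hbound
  -- final measure arithmetic
  have hcompl : P ((A ∩ B)ᶜ) ≤ ENNReal.ofReal δ := by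
    rw [Set.compl_inter]
    calc P (Aᶜ ∪ Bᶜ) ≤ P Aᶜ + P Bᶜ := measure_union_le _ _
      _ ≤ ENNReal.ofReal (δ/2) + ENNReal.ofReal (δ/2) := by
          apply add_le_add hAc
          have : Bᶜ = {ω | t ≤ S ω} := by
            rw [hBdef]
            ext ω
            simp [not_lt]
          rw [this]
          exact hMarkov
      _ = ENNReal.ofReal δ := by
          rw [← ENNReal.ofReal_add (div_nonneg hδ.1.le (by norm_num)) (div_nonneg hδ.1.le (by norm_num))]
          norm_num
  calc ENNReal.ofReal (1 - δ) ≤ 1 - ENNReal.ofReal δ := by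
        apply ENNReal.le_sub_of_add_le_right ENNReal.ofReal_ne_top
        rw [← ENNReal.ofReal_add (by linarith [hδ.2] : (0:ℝ) ≤ 1 - δ) hδ.1.le]
        simp
    _ ≤ 1 - P ((A ∩ B)ᶜ) := tsub_le_tsub_left hcompl 1
    _ = P (A ∩ B) := by
        rw [prob_compl_eq_one_sub (hmA.inter hmB)]
        rw [ENNReal.sub_sub_cancel ENNReal.one_ne_top prob_le_one]
    _ ≤ _ := measure_mono hsubset
end
end

section
/- Assume the generalized distance d satisfies γ₁H²(p,q) ≤ d(p‖q) ≤ γ₂KL(p‖q), and let Q̂_d be a minimum-distance estimator, so d(h^obs‖h_{Q̂_d}) ≤ d(h^obs‖h_Q). Then for any real coefficients b₀,…,b_{2k}, |Σ_{x=0}^{2k} b_x[h^obs(x) − h_{Q̂_d}(x)]| + |Σ_{x=0}^{2k} b_x[h^obs(x) − h_Q(x)]| ≤ C k^{1/2} (max_{0≤x≤2k}|b_x|) √(KL(h^obs‖h_Q)), where C = C(γ₁, γ₂) > 0 depends only on γ₁ and γ₂. -/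
open MeasureTheory

noncomputable section

/-- `p` is a probability mass function on `ℕ`. -/
def IsPMFOn (p : ℕ → ℝ) : Prop := (∀ x, 0 ≤ p x) ∧ HasSum p 1

/-- Squared Hellinger distance. -/
def H2 (p q : ℕ → ℝ) : ℝ := (1/2) * ∑' x, (Real.sqrt (p x) - Real.sqrt (q x)) ^ 2

/-- Kullback-Leibler divergence. -/
def KLdiv (p q : ℕ → ℝ) : ℝ := ∑' x, p x * Real.log (p x / q x)

lemma H2_nonneg (p q : ℕ → ℝ) : 0 ≤ H2 p q := by
  unfold H2
  have := tsum_nonneg (L := .unconditional ℕ) (fun x : ℕ => sq_nonneg (Real.sqrt (p x) - Real.sqrt (q x)))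
  linarith

lemma key (p q : ℕ → ℝ) (hp : IsPMFOn p) (hq : IsPMFOn q) (n : ℕ) :
    ∑ x ∈ Finset.range n, |p x - q x| ≤ 2 * Real.sqrt (2 * H2 p q) := by
  obtain ⟨hp0, hps⟩ := hp
  obtain ⟨hq0, hqs⟩ := hq
  set f : ℕ → ℝ := fun x => |Real.sqrt (p x) - Real.sqrt (q x)|
  set g : ℕ → ℝ := fun x => Real.sqrt (p x) + Real.sqrt (q x)
  have hfg : ∀ x, |p x - q x| = f x * g x := by
    intro x
    have h1 : p x - q x = (Real.sqrt (p x) - Real.sqrt (q x)) * g x := by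
      have := Real.sq_sqrt (hp0 x)
      have := Real.sq_sqrt (hq0 x)
      simp only [g]; nlinarith
    rw [h1, abs_mul, abs_of_nonneg (by positivity : (0:ℝ) ≤ g x)]
  have hsumle : ∀ x, (Real.sqrt (p x) - Real.sqrt (q x)) ^ 2 ≤ 2 * (p x + q x) := by
    intro x
    have h1 := Real.sq_sqrt (hp0 x)
    have h2 := Real.sq_sqrt (hq0 x)
    nlinarith [sq_nonneg (Real.sqrt (p x) + Real.sqrt (q x))]
  have hsummable : Summable (fun x => (Real.sqrt (p x) - Real.sqrt (q x)) ^ 2) := by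
    refine Summable.of_nonneg_of_le (fun x => sq_nonneg _) hsumle ?_
    exact (hps.summable.add hqs.summable).mul_left 2
  have hfsum : ∑ x ∈ Finset.range n, f x ^ 2 ≤ 2 * H2 p q := by
    have : ∑ x ∈ Finset.range n, f x ^ 2 ≤ ∑' x, (Real.sqrt (p x) - Real.sqrt (q x)) ^ 2 := by
      simpa [f, sq_abs] using Summable.sum_le_tsum (Finset.range n)
        (fun x _ => sq_nonneg (Real.sqrt (p x) - Real.sqrt (q x))) hsummable
    unfold H2; linarith
  have hgsum : ∑ x ∈ Finset.range n, g x ^ 2 ≤ 4 := by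
    have h1 : ∑ x ∈ Finset.range n, g x ^ 2 ≤ ∑ x ∈ Finset.range n, 2 * (p x + q x) := by
      refine Finset.sum_le_sum fun x _ => ?_
      have h1 := Real.sq_sqrt (hp0 x)
      have h2 := Real.sq_sqrt (hq0 x)
      simp only [g]
      nlinarith [sq_nonneg (Real.sqrt (p x) - Real.sqrt (q x))]
    have hps' : ∑ x ∈ Finset.range n, p x ≤ 1 := by
      have := Summable.sum_le_tsum (Finset.range n) (fun x _ => hp0 x) hps.summable
      rwa [hps.tsum_eq] at this
    have hqs' : ∑ x ∈ Finset.range n, q x ≤ 1 := by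
      have := Summable.sum_le_tsum (Finset.range n) (fun x _ => hq0 x) hqs.summable
      rwa [hqs.tsum_eq] at this
    rw [Finset.sum_congr rfl (fun x _ => rfl)] at h1
    calc ∑ x ∈ Finset.range n, g x ^ 2 ≤ ∑ x ∈ Finset.range n, 2 * (p x + q x) := h1
      _ = 2 * (∑ x ∈ Finset.range n, p x) + 2 * (∑ x ∈ Finset.range n, q x) := by
          simp [mul_add, Finset.sum_add_distrib, Finset.mul_sum]
      _ ≤ 4 := by linarith
  calc ∑ x ∈ Finset.range n, |p x - q x| = ∑ x ∈ Finset.range n, f x * g x := by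
        exact Finset.sum_congr rfl fun x _ => hfg x
    _ ≤ Real.sqrt (∑ x ∈ Finset.range n, f x ^ 2) * Real.sqrt (∑ x ∈ Finset.range n, g x ^ 2) :=
        Real.sum_mul_le_sqrt_mul_sqrt _ _ _
    _ ≤ Real.sqrt (2 * H2 p q) * Real.sqrt 4 := by
        exact mul_le_mul (Real.sqrt_le_sqrt hfsum) (Real.sqrt_le_sqrt hgsum)
          (Real.sqrt_nonneg _) (Real.sqrt_nonneg _)
    _ = 2 * Real.sqrt (2 * H2 p q) := by
        rw [show (4:ℝ) = 2^2 by norm_num, Real.sqrt_sq (by norm_num)]; ring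

lemma term_bound (γ1 γ2 KL : ℝ) (hγ1 : 0 < γ1) (hγ2 : 0 ≤ γ2) (hKL : 0 ≤ KL)
    (pobs q : ℕ → ℝ) (hpo : IsPMFOn pobs) (hq : IsPMFOn q)
    (hH : H2 pobs q ≤ (γ2 / γ1) * KL) (n : ℕ) (b : ℕ → ℝ) (M : ℝ) (hM0 : 0 ≤ M)
    (hM : ∀ x ∈ Finset.range n, |b x| ≤ M) :
    |∑ x ∈ Finset.range n, b x * (pobs x - q x)| ≤
      2 * Real.sqrt 2 * Real.sqrt (γ2 / γ1) * M * Real.sqrt KL := by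
  calc |∑ x ∈ Finset.range n, b x * (pobs x - q x)|
      ≤ ∑ x ∈ Finset.range n, |b x * (pobs x - q x)| := Finset.abs_sum_le_sum_abs _ _
    _ ≤ ∑ x ∈ Finset.range n, M * |pobs x - q x| := by
        refine Finset.sum_le_sum fun x hx => ?_
        rw [abs_mul]
        exact mul_le_mul_of_nonneg_right (hM x hx) (abs_nonneg _)
    _ = M * ∑ x ∈ Finset.range n, |pobs x - q x| := by rw [Finset.mul_sum]
    _ ≤ M * (2 * Real.sqrt (2 * H2 pobs q)) :=
        mul_le_mul_of_nonneg_left (key pobs q hpo hq n) hM0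
    _ ≤ M * (2 * Real.sqrt (2 * ((γ2 / γ1) * KL))) := by
        have : Real.sqrt (2 * H2 pobs q) ≤ Real.sqrt (2 * ((γ2 / γ1) * KL)) :=
          Real.sqrt_le_sqrt (by linarith)
        nlinarith [Real.sqrt_nonneg (2 * H2 pobs q)]
    _ = 2 * Real.sqrt 2 * Real.sqrt (γ2 / γ1) * M * Real.sqrt KL := by
        rw [Real.sqrt_mul (by norm_num), Real.sqrt_mul (by positivity)]
        ring

/-- comparison inequality for minimum-distance estimators under a
generalized distance sandwiched between the squared Hellinger distance and the
KL divergence. Here `pobs` plays the role of `h^obs`, `pQ` of `h_Q` and `pHat`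
of `h_{Q̂_d}`; the minimum-distance property gives `d(pobs‖pHat) ≤ d(pobs‖pQ)`. -/
theorem stmt10 (γ1 γ2 : ℝ) (hγ1 : 0 < γ1) (hγ2 : 0 < γ2) :
    ∃ C > (0:ℝ),
    ∀ d : (ℕ → ℝ) → (ℕ → ℝ) → ℝ,
      (∀ p q, IsPMFOn p → IsPMFOn q → 0 ≤ d p q ∧ (d p q = 0 ↔ p = q)) →
      (∀ p q, IsPMFOn p → IsPMFOn q → γ1 * H2 p q ≤ d p q ∧ d p q ≤ γ2 * KLdiv p q) →
    ∀ pobs pQ pHat : ℕ → ℝ, IsPMFOn pobs → IsPMFOn pQ → IsPMFOn pHat →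
      d pobs pHat ≤ d pobs pQ →
    ∀ k : ℕ, 1 ≤ k → ∀ b : ℕ → ℝ,
      |∑ x ∈ Finset.range (2 * k + 1), b x * (pobs x - pHat x)| +
        |∑ x ∈ Finset.range (2 * k + 1), b x * (pobs x - pQ x)| ≤
      C * Real.sqrt k *
        ((Finset.range (2 * k + 1)).sup' (Finset.nonempty_range_iff.mpr (Nat.succ_ne_zero _))
          fun x => |b x|) *
        Real.sqrt (KLdiv pobs pQ) := by
  refine ⟨4 * Real.sqrt 2 * Real.sqrt (γ2 / γ1), by positivity, ?_⟩
  intro d _ hsand pobs pQ pHat hpo hpQ hpHat hmin k hk b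
  set KL := KLdiv pobs pQ
  obtain ⟨hQ1, hQ2⟩ := hsand pobs pQ hpo hpQ
  obtain ⟨hH1, _⟩ := hsand pobs pHat hpo hpHat
  have hH2Q : 0 ≤ H2 pobs pQ := H2_nonneg _ _
  have hH2H : 0 ≤ H2 pobs pHat := H2_nonneg _ _
  have hKL : 0 ≤ KL := by nlinarith
  have hbQ : H2 pobs pQ ≤ (γ2 / γ1) * KL := by
    rw [div_mul_eq_mul_div, le_div_iff₀ hγ1]; nlinarith
  have hbH : H2 pobs pHat ≤ (γ2 / γ1) * KL := by
    rw [div_mul_eq_mul_div, le_div_iff₀ hγ1]; nlinarith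
  set M := (Finset.range (2 * k + 1)).sup'
    (Finset.nonempty_range_iff.mpr (Nat.succ_ne_zero _)) fun x => |b x|
  have hM : ∀ x ∈ Finset.range (2 * k + 1), |b x| ≤ M :=
    fun x hx => Finset.le_sup' (fun x => |b x|) hx
  have hM0 : 0 ≤ M := le_trans (abs_nonneg _) (hM 0 (Finset.mem_range.mpr (by omega)))
  have t1 := term_bound γ1 γ2 KL hγ1 hγ2.le hKL pobs pHat hpo hpHat hbH (2*k+1) b M hM0 hM
  have t2 := term_bound γ1 γ2 KL hγ1 hγ2.le hKL pobs pQ hpo hpQ hbQ (2*k+1) b M hM0 hM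
  have hk1 : (1:ℝ) ≤ Real.sqrt k := by
    rw [show (1:ℝ) = Real.sqrt 1 by simp]
    exact Real.sqrt_le_sqrt (by exact_mod_cast hk)
  have hKLs : 0 ≤ Real.sqrt KL := Real.sqrt_nonneg _
  have : |∑ x ∈ Finset.range (2 * k + 1), b x * (pobs x - pHat x)| +
      |∑ x ∈ Finset.range (2 * k + 1), b x * (pobs x - pQ x)| ≤
      4 * Real.sqrt 2 * Real.sqrt (γ2 / γ1) * M * Real.sqrt KL := by linarith
  refine this.trans ?_
  have h2 : 0 ≤ Real.sqrt 2 := Real.sqrt_nonneg _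
  have h3 : 0 ≤ Real.sqrt (γ2 / γ1) := Real.sqrt_nonneg _
  nlinarith [mul_nonneg (mul_nonneg (mul_nonneg h2 h3) hM0) hKLs]
end
end

section
/- Let h^obs be the empirical PMF of n i.i.d. samples from a PMF h_Q on ℤ≥0 with h_Q(x) > 0 for all x in the support, and let A > 1 and k > 0. Then the probability that there exists some x ≥ 0 with h^obs(x) > k h_Q(x) A^x is at most 1/(k(1 − A^{−1})). -/
open MeasureTheory ProbabilityTheory Set

noncomputable section

/-- union/Markov bound: the probability that `h^obs(x) > k h(x) A^x`
for some `x` is at most `1/(k(1 - A⁻¹))`. -/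
theorem stmt11 (h : ℕ → ℝ) (hpos : ∀ x, 0 ≤ h x) (hsum : HasSum h 1)
    (hsupp : ∀ x, h x ≠ 0 → 0 < h x)
    (A k : ℝ) (hA : 1 < A) (hk : 0 < k) (n : ℕ) (hn : 1 ≤ n)
    (Ω : Type) (_ : MeasurableSpace Ω) (P : Measure Ω) (hP : IsProbabilityMeasure P)
    (X : Fin n → Ω → ℕ) (hX : IIDSample P X h) :
    P {ω | ∃ x : ℕ, hObs (fun i => X i ω) x > k * h x * A ^ x} ≤
      ENNReal.ofReal (1 / (k * (1 - A⁻¹))) := by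
  obtain ⟨hXm, hXindep, hXdist⟩ := hX
  have hA0 : (0:ℝ) < A := lt_trans one_pos hA
  have hAinv0 : (0:ℝ) ≤ A⁻¹ := inv_nonneg.2 hA0.le
  have hAinv1 : A⁻¹ < 1 := inv_lt_one_of_one_lt₀ hA
  have hn0 : (0:ℝ) < n := by exact_mod_cast hn
  -- per-x bound
  have key : ∀ x : ℕ, P {ω | hObs (fun i => X i ω) x > k * h x * A ^ x}
      ≤ ENNReal.ofReal (A⁻¹ ^ x / k) := by
    intro x
    by_cases hx : h x = 0
    · -- event has probability 0
      have hsub : {ω | hObs (fun i => X i ω) x > k * h x * A ^ x} ⊆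
          ⋃ i : Fin n, {ω | X i ω = x} := by
        intro ω hω
        simp only [mem_setOf_eq, hx, mul_zero, zero_mul] at hω
        by_contra hc
        simp only [mem_iUnion, mem_setOf_eq, not_exists] at hc
        have : hObs (fun i => X i ω) x = 0 := by
          unfold hObs
          have : ∀ i : Fin n, (if X i ω = x then (1:ℝ) else 0) = 0 := fun i => by
            simp [hc i]
          simp [this]
        rw [this] at hω; exact lt_irrefl _ hω
      calc P _ ≤ ∑ i : Fin n, P {ω | X i ω = x} :=
              (measure_mono hsub).trans (measure_iUnion_fintype_le _ _)
        _ = 0 := by simp [hXdist, hx]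
        _ ≤ _ := zero_le
    · have hhx : 0 < h x := hsupp x hx
      have hcpos : 0 < k * h x * A ^ x := by positivity
      set f : Ω → ENNReal := fun ω => ENNReal.ofReal (hObs (fun i => X i ω) x) with hf
      have hmeas : ∀ i : Fin n, MeasurableSet {ω | X i ω = x} :=
        fun i => (hXm i) (measurableSet_singleton x)
      have hfm : Measurable f := by
        apply Measurable.ennreal_ofReal
        unfold hObs
        apply Measurable.div_const
        apply Finset.measurable_sum
        intro i _
        exact Measurable.ite (hmeas i) measurable_const measurable_const
      have hsub : {ω | hObs (fun i => X i ω) x > k * h x * A ^ x} ⊆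
          {ω | ENNReal.ofReal (k * h x * A ^ x) ≤ f ω} := by
        intro ω hω
        exact ENNReal.ofReal_le_ofReal (le_of_lt hω)
      have hint : ∫⁻ ω, f ω ∂P = ENNReal.ofReal (h x) := by
        have hfeq : ∀ ω, f ω =
            (∑ i : Fin n, Set.indicator {ω | X i ω = x} (fun _ => (1:ENNReal)) ω) / n := by
          intro ω
          rw [hf]
          unfold hObs
          dsimp only
          rw [ENNReal.ofReal_div_of_pos hn0, ENNReal.ofReal_natCast]
          congr 1
          rw [ENNReal.ofReal_sum_of_nonneg (fun i _ => by positivity)]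
          refine Finset.sum_congr rfl fun i _ => ?_
          by_cases hix : X i ω = x <;> simp [hix, Set.indicator]
        calc ∫⁻ ω, f ω ∂P
            = (∑ i : Fin n, ∫⁻ ω, Set.indicator {ω | X i ω = x} (fun _ => (1:ENNReal)) ω ∂P) / n := by
              simp_rw [hfeq, div_eq_mul_inv]
              rw [lintegral_mul_const _ (Finset.measurable_sum _ (fun i _ =>
                measurable_const.indicator (hmeas i))),
                lintegral_finset_sum _ (fun i _ =>
                  measurable_const.indicator (hmeas i))]
          _ = (∑ i : Fin n, P {ω | X i ω = x}) / n := by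
              congr 1
              refine Finset.sum_congr rfl fun i _ => ?_
              exact lintegral_indicator_one (hmeas i)
          _ = ENNReal.ofReal (h x) := by
              simp only [hXdist]
              rw [Finset.sum_const, Finset.card_univ, Fintype.card_fin, nsmul_eq_mul]
              rw [mul_comm, mul_div_assoc, ENNReal.div_self (by positivity) (ENNReal.natCast_ne_top n), mul_one]
      have hmarkov := meas_ge_le_lintegral_div (μ := P) hfm.aemeasurable
        (ε := ENNReal.ofReal (k * h x * A ^ x))
        (by simp [ENNReal.ofReal_eq_zero, not_le, hcpos]) ENNReal.ofReal_ne_top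
      calc P {ω | hObs (fun i => X i ω) x > k * h x * A ^ x}
          ≤ P {ω | ENNReal.ofReal (k * h x * A ^ x) ≤ f ω} := measure_mono hsub
        _ ≤ (∫⁻ ω, f ω ∂P) / ENNReal.ofReal (k * h x * A ^ x) := hmarkov
        _ = ENNReal.ofReal (h x) / ENNReal.ofReal (k * h x * A ^ x) := by rw [hint]
        _ = ENNReal.ofReal (h x / (k * h x * A ^ x)) :=
            (ENNReal.ofReal_div_of_pos hcpos).symm
        _ = ENNReal.ofReal (A⁻¹ ^ x / k) := by
            congr 1
            have hk' : k ≠ 0 := hk.ne'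
            have hA' : A ≠ 0 := hA0.ne'
            have hAx : (A:ℝ) ^ x ≠ 0 := pow_ne_zero _ hA'
            rw [inv_pow]
            field_simp
  calc P {ω | ∃ x : ℕ, hObs (fun i => X i ω) x > k * h x * A ^ x}
      ≤ ∑' x : ℕ, P {ω | hObs (fun i => X i ω) x > k * h x * A ^ x} := by
        refine (measure_mono ?_).trans (measure_iUnion_le _)
        rintro ω ⟨x, hx⟩
        exact mem_iUnion.2 ⟨x, hx⟩
    _ ≤ ∑' x : ℕ, ENNReal.ofReal (A⁻¹ ^ x / k) := ENNReal.tsum_le_tsum key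
    _ = ENNReal.ofReal (∑' x : ℕ, A⁻¹ ^ x / k) := by
        rw [ENNReal.ofReal_tsum_of_nonneg (fun x => by positivity)]
        exact (summable_geometric_of_lt_one hAinv0 hAinv1).div_const k
    _ = ENNReal.ofReal (1 / (k * (1 - A⁻¹))) := by
        congr 1
        rw [tsum_div_const, tsum_geometric_of_lt_one hAinv0 hAinv1]
        field_simp
end
end
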